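/- arXiv:1506.00226 — 2 statements merged into one kernel-verified Lean document; each statement's English description precedes it below -/
import Mathlib

section
/- Let A, B be n×n positive definite complex matrices, let v ∈ (0,1), and let m, m', M, M' be positive reals satisfying either m'·I ≤ A ≤ m·I < M·I ≤ B ≤ M'·I or m'·I ≤ B ≤ m·I < M·I ≤ A ≤ M'·I in the Loewner order. Then A∇B ≥ 2r(A∇B − A#B) + r₁(A∇B + A#B − 2H_{1/4}(A, B)) + K(h^{1/4}, 2)^{r̂₁} · H_v(A, B) in the Loewner order, where h = M/m, r = min{v, 1 − v}, r₁ = min{2r, 1 − 2r} and r̂₁ = min{2r₁, 1 − 2r₁}. -/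
open Matrix
open scoped ComplexOrder

/-- Real power of a matrix, defined for Hermitian matrices via the spectral
decomposition (functional calculus); junk value otherwise. -/
noncomputable def mrpow {n : ℕ} (A : Matrix (Fin n) (Fin n) ℂ) (t : ℝ) :
    Matrix (Fin n) (Fin n) ℂ :=
  if h : A.IsHermitian then
    (h.eigenvectorUnitary : Matrix (Fin n) (Fin n) ℂ)
      * Matrix.diagonal (fun i => ((h.eigenvalues i ^ t : ℝ) : ℂ))
      * star (h.eigenvectorUnitary : Matrix (Fin n) (Fin n) ℂ)
  else A

/-- Weighted arithmetic mean `A ∇_v B = (1 - v) A + v B`. -/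
noncomputable def anabla {n : ℕ} (v : ℝ) (A B : Matrix (Fin n) (Fin n) ℂ) :
    Matrix (Fin n) (Fin n) ℂ :=
  ((1 - v : ℝ) : ℂ) • A + ((v : ℝ) : ℂ) • B

/-- Weighted geometric mean `A #_v B = A^{1/2} (A^{-1/2} B A^{-1/2})^v A^{1/2}`. -/
noncomputable def asharp {n : ℕ} (v : ℝ) (A B : Matrix (Fin n) (Fin n) ℂ) :
    Matrix (Fin n) (Fin n) ℂ :=
  mrpow A (1 / 2) * mrpow (mrpow A (-(1 / 2)) * B * mrpow A (-(1 / 2))) v * mrpow A (1 / 2)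

/-- Heinz operator mean `H_v(A, B) = (A #_v B + A #_{1-v} B) / 2`. -/
noncomputable def heinz {n : ℕ} (v : ℝ) (A B : Matrix (Fin n) (Fin n) ℂ) :
    Matrix (Fin n) (Fin n) ℂ :=
  ((1 / 2 : ℝ) : ℂ) • (asharp v A B + asharp (1 - v) A B)

/-- The Loewner order: `loewner X Y` iff `Y - X` is positive semidefinite. -/
def loewner {n : ℕ} (X Y : Matrix (Fin n) (Fin n) ℂ) : Prop := (Y - X).PosSemidef

/-- The Kantorovich constant `K(t, 2) = (t + 1)^2 / (4 t)`. -/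
noncomputable def Kant (t : ℝ) : ℝ := (t + 1) ^ 2 / (4 * t)

section Aux
variable {n : ℕ} {A : Matrix (Fin n) (Fin n) ℂ}


lemma mrpow_eq (hA : A.IsHermitian) (t : ℝ) :
    mrpow A t = (hA.eigenvectorUnitary : Matrix (Fin n) (Fin n) ℂ)
      * Matrix.diagonal (fun i => ((hA.eigenvalues i ^ t : ℝ) : ℂ))
      * star (hA.eigenvectorUnitary : Matrix (Fin n) (Fin n) ℂ) := by
  rw [mrpow, dif_pos hA]

lemma star_unitary_mul_self (hA : A.IsHermitian) :
    star (hA.eigenvectorUnitary : Matrix (Fin n) (Fin n) ℂ)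
      * (hA.eigenvectorUnitary : Matrix (Fin n) (Fin n) ℂ) = 1 := by
  exact Unitary.coe_star_mul_self _

lemma unitary_mul_star_self (hA : A.IsHermitian) :
    (hA.eigenvectorUnitary : Matrix (Fin n) (Fin n) ℂ)
      * star (hA.eigenvectorUnitary : Matrix (Fin n) (Fin n) ℂ) = 1 := by
  exact Unitary.coe_mul_star_self _

lemma star_mul_self_mul_eq_diag (hA : A.IsHermitian) :
    star (hA.eigenvectorUnitary : Matrix (Fin n) (Fin n) ℂ) * A
      * (hA.eigenvectorUnitary : Matrix (Fin n) (Fin n) ℂ)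
      = Matrix.diagonal (RCLike.ofReal ∘ hA.eigenvalues) := by
  have := hA.conjStarAlgAut_star_eigenvectorUnitary
  rw [Unitary.conjStarAlgAut_apply, Unitary.coe_star, star_star] at this
  exact this

lemma mrpow_mul_mrpow (hA : A.PosDef) (s t : ℝ) :
    mrpow A s * mrpow A t = mrpow A (s + t) := by
  rw [mrpow_eq hA.1, mrpow_eq hA.1, mrpow_eq hA.1]
  have h1 := star_unitary_mul_self hA.1
  calc (hA.1.eigenvectorUnitary : Matrix (Fin n) (Fin n) ℂ)
      * Matrix.diagonal (fun i => ((hA.1.eigenvalues i ^ s : ℝ) : ℂ))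
      * star (hA.1.eigenvectorUnitary : Matrix (Fin n) (Fin n) ℂ)
      * ((hA.1.eigenvectorUnitary : Matrix (Fin n) (Fin n) ℂ)
      * Matrix.diagonal (fun i => ((hA.1.eigenvalues i ^ t : ℝ) : ℂ))
      * star (hA.1.eigenvectorUnitary : Matrix (Fin n) (Fin n) ℂ))
      = (hA.1.eigenvectorUnitary : Matrix (Fin n) (Fin n) ℂ)
      * (Matrix.diagonal (fun i => ((hA.1.eigenvalues i ^ s : ℝ) : ℂ))
        * Matrix.diagonal (fun i => ((hA.1.eigenvalues i ^ t : ℝ) : ℂ)))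
      * star (hA.1.eigenvectorUnitary : Matrix (Fin n) (Fin n) ℂ) := by
        rw [show ∀ (U D1 D2 V : Matrix (Fin n) (Fin n) ℂ), U * D1 * V * (U * D2 * V) = U * (D1 * (V * U) * D2) * V from fun _ _ _ _ => by noncomm_ring, h1, mul_one]
    _ = _ := by
        rw [Matrix.diagonal_mul_diagonal]
        have hd : (fun i => ((hA.1.eigenvalues i ^ s : ℝ) : ℂ) * ((hA.1.eigenvalues i ^ t : ℝ) : ℂ))
            = fun i => ((hA.1.eigenvalues i ^ (s + t) : ℝ) : ℂ) := by
          funext i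
          rw [← Complex.ofReal_mul, ← Real.rpow_add (hA.eigenvalues_pos i)]
        rw [hd]

lemma mrpow_zero (hA : A.IsHermitian) : mrpow A 0 = 1 := by
  rw [mrpow_eq hA]
  simp only [Real.rpow_zero, Complex.ofReal_one]
  rw [Matrix.diagonal_one, mul_one, unitary_mul_star_self hA]

lemma mrpow_one (hA : A.IsHermitian) : mrpow A 1 = A := by
  rw [mrpow_eq hA]
  simp only [Real.rpow_one]
  exact (hA.spectral_theorem).symm

lemma mrpow_isHermitian (hA : A.IsHermitian) (t : ℝ) : (mrpow A t).IsHermitian := by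
  rw [mrpow_eq hA]
  rw [Matrix.star_eq_conjTranspose]
  exact Matrix.isHermitian_mul_mul_conjTranspose _
    (Matrix.isHermitian_diagonal_of_self_adjoint _ (by
      show star _ = _
      funext i
      exact Complex.conj_ofReal _))

lemma mrpow_posSemidef (hA : A.IsHermitian) (t : ℝ) (h0 : ∀ i, 0 ≤ hA.eigenvalues i ^ t) :
    (mrpow A t).PosSemidef := by
  rw [mrpow_eq hA]
  exact (Matrix.posSemidef_diagonal_iff.mpr (fun i => by
    simpa using Complex.zero_le_real.mpr (h0 i))).mul_mul_conjTranspose_same _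

lemma conj_diag_add (U : Matrix (Fin n) (Fin n) ℂ) (d e : Fin n → ℝ) :
    U * Matrix.diagonal (fun i => ((d i : ℝ) : ℂ)) * star U
      + U * Matrix.diagonal (fun i => ((e i : ℝ) : ℂ)) * star U
      = U * Matrix.diagonal (fun i => ((d i + e i : ℝ) : ℂ)) * star U := by
  have : Matrix.diagonal (fun i => ((d i + e i : ℝ) : ℂ))
      = Matrix.diagonal (fun i => ((d i : ℝ) : ℂ)) + Matrix.diagonal (fun i => ((e i : ℝ) : ℂ)) := by
    rw [Matrix.diagonal_add]
    congr 1
    funext i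
    push_cast
    ring
  rw [this, Matrix.mul_add, Matrix.add_mul]

lemma conj_diag_smul (U : Matrix (Fin n) (Fin n) ℂ) (c : ℝ) (d : Fin n → ℝ) :
    ((c : ℝ) : ℂ) • (U * Matrix.diagonal (fun i => ((d i : ℝ) : ℂ)) * star U)
      = U * Matrix.diagonal (fun i => ((c * d i : ℝ) : ℂ)) * star U := by
  have : Matrix.diagonal (fun i => ((c * d i : ℝ) : ℂ))
      = ((c : ℝ) : ℂ) • Matrix.diagonal (fun i => ((d i : ℝ) : ℂ)) := by
    ext i j
    rcases eq_or_ne i j with rfl | hij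
    · simp [Matrix.diagonal_apply_eq, Complex.ofReal_mul]
    · simp [Matrix.diagonal_apply_ne _ hij, hij]
  rw [this, Matrix.mul_smul, Matrix.smul_mul]

lemma eig_ge (hT : A.IsHermitian) (c : ℝ) (hP : (A - (c : ℂ) • 1).PosSemidef) (i : Fin n) :
    c ≤ hT.eigenvalues i := by
  have h2 : star (hT.eigenvectorUnitary : Matrix (Fin n) (Fin n) ℂ) * (A - (c : ℂ) • 1)
      * (hT.eigenvectorUnitary : Matrix (Fin n) (Fin n) ℂ)
      = Matrix.diagonal (fun i => ((hT.eigenvalues i - c : ℝ) : ℂ)) := by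
    rw [mul_sub, sub_mul, star_mul_self_mul_eq_diag hT]
    rw [mul_smul_comm, smul_mul_assoc, mul_one, star_unitary_mul_self hT]
    have : Matrix.diagonal (fun i => ((hT.eigenvalues i - c : ℝ) : ℂ))
        = Matrix.diagonal (RCLike.ofReal ∘ hT.eigenvalues) - (c : ℂ) • (1 : Matrix (Fin n) (Fin n) ℂ) := by
      rw [← Matrix.diagonal_one, ← Matrix.diagonal_smul, Matrix.diagonal_sub]
      congr 1
      funext i
      push_cast
      simp [Function.comp]
    rw [this]
  have h3 := hP.conjTranspose_mul_mul_same (hT.eigenvectorUnitary : Matrix (Fin n) (Fin n) ℂ)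
  rw [← Matrix.star_eq_conjTranspose, h2] at h3
  have h4 := Matrix.posSemidef_diagonal_iff.mp h3 i
  simpa using h4

lemma eig_le (hT : A.IsHermitian) (c : ℝ) (hP : ((c : ℂ) • 1 - A).PosSemidef) (i : Fin n) :
    hT.eigenvalues i ≤ c := by
  have h2 : star (hT.eigenvectorUnitary : Matrix (Fin n) (Fin n) ℂ) * ((c : ℂ) • 1 - A)
      * (hT.eigenvectorUnitary : Matrix (Fin n) (Fin n) ℂ)
      = Matrix.diagonal (fun i => ((c - hT.eigenvalues i : ℝ) : ℂ)) := by
    rw [mul_sub, sub_mul, star_mul_self_mul_eq_diag hT]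
    rw [mul_smul_comm, smul_mul_assoc, mul_one, star_unitary_mul_self hT]
    have : Matrix.diagonal (fun i => ((c - hT.eigenvalues i : ℝ) : ℂ))
        = (c : ℂ) • (1 : Matrix (Fin n) (Fin n) ℂ) - Matrix.diagonal (RCLike.ofReal ∘ hT.eigenvalues) := by
      rw [← Matrix.diagonal_one, ← Matrix.diagonal_smul, Matrix.diagonal_sub]
      congr 1
      funext i
      push_cast
      simp [Function.comp]
    rw [this]
  have h3 := hP.conjTranspose_mul_mul_same (hT.eigenvectorUnitary : Matrix (Fin n) (Fin n) ℂ)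
  rw [← Matrix.star_eq_conjTranspose, h2] at h3
  have h4 := Matrix.posSemidef_diagonal_iff.mp h3 i
  simpa using h4

lemma psd_smul {X : Matrix (Fin n) (Fin n) ℂ} (hX : X.PosSemidef) {c : ℝ} (hc : 0 ≤ c) :
    (((c : ℝ) : ℂ) • X).PosSemidef := by
  constructor
  · rw [Matrix.IsHermitian, Matrix.conjTranspose_smul, hX.1.eq]
    congr 1
    exact Complex.conj_ofReal c
  · intro x
    exact (hX.smul (Complex.zero_le_real.2 hc)).2 x

noncomputable def cdq (Q U : Matrix (Fin n) (Fin n) ℂ) (f : Fin n → ℝ) :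
    Matrix (Fin n) (Fin n) ℂ :=
  Q * (U * Matrix.diagonal (fun i => ((f i : ℝ) : ℂ)) * star U) * Q

lemma cdq_add (Q U : Matrix (Fin n) (Fin n) ℂ) (f g : Fin n → ℝ) :
    cdq Q U f + cdq Q U g = cdq Q U (fun i => f i + g i) := by
  unfold cdq
  rw [← conj_diag_add]
  rw [mul_add, add_mul]

lemma cdq_smul (Q U : Matrix (Fin n) (Fin n) ℂ) (c : ℝ) (f : Fin n → ℝ) :
    ((c : ℝ) : ℂ) • cdq Q U f = cdq Q U (fun i => c * f i) := by
  unfold cdq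
  rw [← conj_diag_smul]
  rw [mul_smul_comm, smul_mul_assoc]

lemma cdq_sub (Q U : Matrix (Fin n) (Fin n) ℂ) (f g : Fin n → ℝ) :
    cdq Q U f - cdq Q U g = cdq Q U (fun i => f i - g i) := by
  have h1 : cdq Q U g + cdq Q U (fun i => f i - g i) = cdq Q U f := by
    rw [cdq_add]
    congr 1
    funext i
    ring
  linear_combination (norm := abel) h1.symm

lemma cdq_posSemidef {Q U : Matrix (Fin n) (Fin n) ℂ} (hQ : Q.IsHermitian)
    (f : Fin n → ℝ) (hf : ∀ i, 0 ≤ f i) : (cdq Q U f).PosSemidef := by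
  have h1 : (Matrix.diagonal (fun i => ((f i : ℝ) : ℂ))).PosSemidef :=
    Matrix.posSemidef_diagonal_iff.mpr (fun i => Complex.zero_le_real.2 (hf i))
  have h2 := h1.mul_mul_conjTranspose_same U
  rw [← Matrix.star_eq_conjTranspose] at h2
  have h3 := h2.mul_mul_conjTranspose_same Q
  rw [hQ.eq] at h3
  exact h3



lemma Kant_pos {t : ℝ} (ht : 0 < t) : 0 < Kant t := by
  unfold Kant; positivity

lemma Kant_one_le {t : ℝ} (ht : 0 < t) : 1 ≤ Kant t := by
  rw [Kant, le_div_iff₀ (by positivity)]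
  nlinarith [sq_nonneg (t - 1)]

lemma Kant_inv {t : ℝ} (ht : 0 < t) : Kant t⁻¹ = Kant t := by
  unfold Kant
  field_simp
  ring

lemma Kant_mono {s t : ℝ} (h1 : 1 ≤ s) (hst : s ≤ t) : Kant s ≤ Kant t := by
  have hs : 0 < s := by linarith
  have ht : 0 < t := by linarith
  rw [Kant, Kant, div_le_div_iff₀ (by positivity) (by positivity)]
  have hst1 : 1 ≤ s * t := by nlinarith
  nlinarith [mul_nonneg (sub_nonneg.2 hst) (sub_nonneg.2 hst1)]

lemma KY {β y : ℝ} (hb0 : 0 ≤ β) (hb1 : β ≤ 1) (hy : 0 < y) :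
    Kant y ^ min β (1 - β) * y ^ β ≤ 1 - β + β * y := by
  have hy1 : (0:ℝ) < (y + 1) / 2 := by linarith
  have hKy : Kant y * y = ((y + 1) / 2) ^ (2:ℕ) := by
    rw [Kant]; field_simp; ring
  rcases le_total β (1 - β) with hb | hb
  · -- β ≤ 1/2
    rw [min_eq_left hb]
    have key : Kant y ^ β * y ^ β = ((y + 1) / 2) ^ (2 * β) := by
      rw [← Real.mul_rpow (Kant_pos hy).le hy.le, hKy, ← Real.rpow_natCast ((y+1)/2) 2,
        ← Real.rpow_mul hy1.le]
      norm_num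
    have am := Real.geom_mean_le_arith_mean2_weighted (by linarith : (0:ℝ) ≤ 2 * β)
      (by linarith : (0:ℝ) ≤ 1 - 2 * β) hy1.le (zero_le_one) (by ring)
    rw [Real.one_rpow, mul_one] at am
    rw [key]
    calc ((y + 1) / 2) ^ (2 * β) ≤ 2 * β * ((y + 1) / 2) + (1 - 2 * β) * 1 := am
      _ = 1 - β + β * y := by ring
  · -- β ≥ 1/2
    rw [min_eq_right hb]
    have key : Kant y ^ (1 - β) * y ^ β = ((y + 1) / 2) ^ (2 * (1 - β)) * y ^ (2 * β - 1) := by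
      have : y ^ β = y ^ (1 - β) * y ^ (2 * β - 1) := by
        rw [← Real.rpow_add hy]; ring_nf
      rw [this, ← mul_assoc, ← Real.mul_rpow (Kant_pos hy).le hy.le, hKy,
        ← Real.rpow_natCast ((y+1)/2) 2, ← Real.rpow_mul hy1.le]
      norm_num
    have am := Real.geom_mean_le_arith_mean2_weighted (by linarith : (0:ℝ) ≤ 2 * (1 - β))
      (by linarith : (0:ℝ) ≤ 2 * β - 1) hy1.le hy.le (by ring)
    rw [key]
    calc ((y + 1) / 2) ^ (2 * (1 - β)) * y ^ (2 * β - 1)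
        ≤ 2 * (1 - β) * ((y + 1) / 2) + (2 * β - 1) * y := am
      _ = 1 - β + β * y := by ring

lemma KY_shift {β y k : ℝ} (hb0 : 0 ≤ β) (hb1 : β ≤ 1) (hy : 0 < y) :
    Kant y ^ min β (1 - β) * y ^ (k + β) ≤ (1 - β) * y ^ k + β * y ^ (k + 1) := by
  have h1 := KY hb0 hb1 hy
  have h2 := mul_le_mul_of_nonneg_left h1 (le_of_lt (Real.rpow_pos_of_pos hy k))
  calc Kant y ^ min β (1-β) * y ^ (k+β) = y ^ k * (Kant y ^ min β (1-β) * y ^ β) := by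
        rw [Real.rpow_add hy]; ring
    _ ≤ y ^ k * (1 - β + β * y) := h2
    _ = (1-β) * y ^ k + β * y ^ (k+1) := by rw [Real.rpow_add hy, Real.rpow_one]; ring

lemma KY_shift' {β y k : ℝ} (hb0 : 0 ≤ β) (hb1 : β ≤ 1) (hy : 0 < y) :
    Kant y ^ min β (1 - β) * y ^ (k - β) ≤ (1 - β) * y ^ k + β * y ^ (k - 1) := by
  have h0 : (0:ℝ) < y⁻¹ := by positivity
  have h1 := KY hb0 hb1 h0
  rw [Kant_inv hy] at h1
  have h2 := mul_le_mul_of_nonneg_left h1 (le_of_lt (Real.rpow_pos_of_pos hy k))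
  have e1 : y ^ k * (y⁻¹) ^ β = y ^ (k - β) := by
    rw [Real.inv_rpow hy.le, ← Real.rpow_neg hy.le, ← Real.rpow_add hy]
    ring_nf
  have e2 : y⁻¹ * y ^ k = y ^ (k - 1) := by
    rw [← Real.rpow_neg_one y, ← Real.rpow_add hy]
    ring_nf
  calc Kant y ^ min β (1-β) * y ^ (k-β) = y ^ k * (Kant y ^ min β (1-β) * (y⁻¹) ^ β) := by
        rw [← e1]; ring
    _ ≤ y ^ k * (1 - β + β * y⁻¹) := h2
    _ = (1-β) * y ^ k + β * (y⁻¹ * y ^ k) := by ring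
    _ = (1-β) * y ^ k + β * y ^ (k-1) := by rw [e2]

-- main scalar inequality
lemma scalar_main {h x v r r1 rh1 : ℝ} (hh1 : 1 < h) (hx : 0 < x)
    (hcase : h ≤ x ∨ x ≤ h⁻¹)
    (hv0 : 0 < v) (hv1 : v < 1) (hr : r = min v (1 - v))
    (hr1 : r1 = min (2 * r) (1 - 2 * r))
    (hrh1 : rh1 = min (2 * r1) (1 - 2 * r1)) :
    Kant (h ^ ((1:ℝ)/4)) ^ rh1 * (x ^ v + x ^ (1 - v))
      ≤ (1 - 2*r - r1) * (1 + x) + 2*(2*r - r1) * x ^ ((1:ℝ)/2)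
        + 2*r1 * (x ^ ((1:ℝ)/4) + x ^ ((3:ℝ)/4)) := by
  have hr0 : 0 < r := by rw [hr]; simp [lt_min_iff]; constructor <;> linarith
  have hrhalf : r ≤ 1/2 := by
    rw [hr]; rcases le_total v (1-v) with hc | hc
    · rw [min_eq_left hc]; linarith
    · rw [min_eq_right hc]; linarith
  have hr10 : 0 ≤ r1 := by rw [hr1]; simp [le_min_iff]; constructor <;> linarith
  have hr1half : r1 ≤ 1/2 := by
    rw [hr1]
    rcases le_total (2*r) (1-2*r) with hc | hc
    · rw [min_eq_left hc]; linarith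
    · rw [min_eq_right hc]; linarith
  have hrh10 : 0 ≤ rh1 := by rw [hrh1]; simp [le_min_iff]; constructor <;> linarith
  -- y = x^{1/4}
  set y := x ^ ((1:ℝ)/4) with hy_def
  have hy : 0 < y := Real.rpow_pos_of_pos hx _
  -- express powers of x as powers of y
  have hpow : ∀ t : ℝ, x ^ (t/4) = y ^ t := by
    intro t
    rw [hy_def, ← Real.rpow_mul hx.le]
    ring_nf
  have hx12 : x ^ ((1:ℝ)/2) = y ^ (2:ℝ) := by rw [← hpow]; norm_num
  have hx34 : x ^ ((3:ℝ)/4) = y ^ (3:ℝ) := by rw [← hpow]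
  have hx14 : x ^ ((1:ℝ)/4) = y ^ (1:ℝ) := by rw [← hpow]
  have hx1 : x = y ^ (4:ℝ) := by rw [← hpow]; norm_num
  have hxr : x ^ r = y ^ (4*r) := by rw [← hpow]; ring_nf
  have hxr' : x ^ (1-r) = y ^ (4 - 4*r) := by rw [← hpow]; ring_nf
  -- Heinz symmetry
  have hsym : x ^ v + x ^ (1 - v) = x ^ r + x ^ (1 - r) := by
    rw [hr]; rcases le_total v (1-v) with hc | hc
    · rw [min_eq_left hc]
    · rw [min_eq_right hc]; ring_nf
  -- Kantorovich constant comparison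
  have hK0pos : 0 < Kant (h ^ ((1:ℝ)/4)) := Kant_pos (Real.rpow_pos_of_pos (by linarith) _)
  have hh14 : 1 ≤ h ^ ((1:ℝ)/4) := Real.one_le_rpow hh1.le (by norm_num)
  have hKle : Kant (h ^ ((1:ℝ)/4)) ≤ Kant y := by
    rcases hcase with hc | hc
    · exact Kant_mono hh14 (by
        rw [hy_def]
        calc h ^ ((1:ℝ)/4) ≤ x ^ ((1:ℝ)/4) := Real.rpow_le_rpow (by linarith) hc (by norm_num)
          _ = _ := rfl)
    · have hyinv : h ^ ((1:ℝ)/4) ≤ y⁻¹ := by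
        have h1 : y ≤ (h⁻¹) ^ ((1:ℝ)/4) := by
          rw [hy_def]; exact Real.rpow_le_rpow hx.le hc (by norm_num)
        have h2 : (h⁻¹) ^ ((1:ℝ)/4) = (h ^ ((1:ℝ)/4))⁻¹ := by
          rw [← Real.rpow_neg_one h, ← Real.rpow_mul (by linarith : (0:ℝ) ≤ h),
            ← Real.rpow_neg_one (h ^ ((1:ℝ)/4)), ← Real.rpow_mul (by linarith : (0:ℝ) ≤ h)]
          ring_nf
        rw [h2] at h1
        rw [← inv_inv (h ^ ((1:ℝ)/4))]
        exact inv_anti₀ (by positivity) h1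
      calc Kant (h ^ ((1:ℝ)/4)) ≤ Kant y⁻¹ := Kant_mono hh14 hyinv
        _ = Kant y := Kant_inv hy
  have hKrle : Kant (h ^ ((1:ℝ)/4)) ^ rh1 ≤ Kant y ^ rh1 :=
    Real.rpow_le_rpow hK0pos.le hKle hrh10
  set c := Kant (h ^ ((1:ℝ)/4)) ^ rh1 with hc_def
  have hcpos : 0 < c := Real.rpow_pos_of_pos hK0pos _
  rw [hsym, hxr, hxr', hx12, hx34, hx1]
  have hy4r : 0 < y ^ (4*r) := Real.rpow_pos_of_pos hy _
  have hy4r' : 0 < y ^ (4 - 4*r) := Real.rpow_pos_of_pos hy _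
  have step1 : c * (y ^ (4*r) + y ^ (4 - 4*r))
      ≤ Kant y ^ rh1 * y ^ (4*r) + Kant y ^ rh1 * y ^ (4 - 4*r) := by
    rw [mul_add]
    gcongr
  rcases le_total (2*r) (1 - 2*r) with hcm | hcm
  · -- r1 = 2r, β = 4r
    have hr1v : r1 = 2*r := by rw [hr1, min_eq_left hcm]
    have hb0 : (0:ℝ) ≤ 4*r := by linarith
    have hb1 : 4*r ≤ 1 := by linarith
    have hmin : min (4*r) (1 - 4*r) = rh1 := by
      rw [hrh1, hr1v]; ring_nf
    have i1 := KY_shift (k := 0) hb0 hb1 hy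
    rw [hmin, zero_add, Real.rpow_zero, zero_add, Real.rpow_one] at i1
    have i2 := KY_shift' (k := 4) hb0 hb1 hy
    rw [hmin] at i2
    have e3 : (4:ℝ) - 4*r = 4 - 4*r := rfl
    have e4 : ((4:ℝ) - 1) = 3 := by norm_num
    rw [e4] at i2
    have := add_le_add i1 i2
    calc c * (y ^ (4*r) + y ^ (4 - 4*r))
        ≤ Kant y ^ rh1 * y ^ (4*r) + Kant y ^ rh1 * y ^ (4 - 4*r) := step1
      _ ≤ (1 - 4*r + 4*r * y) + ((1 - 4*r) * y ^ (4:ℝ) + 4*r * y ^ (3:ℝ)) := by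
          have := add_le_add i1 i2
          linarith
      _ = (1 - 2*r - r1) * (1 + y ^ (4:ℝ)) + 2*(2*r - r1) * y ^ (2:ℝ)
          + 2*r1 * (y + y ^ (3:ℝ)) := by
          rw [hr1v]; ring
  · -- r1 = 1 - 2r, β = 2 - 4r
    have hr1v : r1 = 1 - 2*r := by rw [hr1, min_eq_right hcm]
    have hb0 : (0:ℝ) ≤ 2 - 4*r := by linarith
    have hb1 : 2 - 4*r ≤ 1 := by linarith
    have hmin : min (2 - 4*r) (1 - (2 - 4*r)) = rh1 := by
      rw [hrh1, hr1v]; ring_nf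
    have i1 := KY_shift' (k := 2) hb0 hb1 hy
    rw [hmin] at i1
    have e1 : (2:ℝ) - (2 - 4*r) = 4*r := by ring
    have e2 : ((2:ℝ) - 1) = 1 := by norm_num
    rw [e1, e2, Real.rpow_one] at i1
    have i2 := KY_shift (k := 2) hb0 hb1 hy
    rw [hmin] at i2
    have e3 : (2:ℝ) + (2 - 4*r) = 4 - 4*r := by ring
    have e4 : ((2:ℝ) + 1) = 3 := by norm_num
    rw [e3, e4] at i2
    calc c * (y ^ (4*r) + y ^ (4 - 4*r))
        ≤ Kant y ^ rh1 * y ^ (4*r) + Kant y ^ rh1 * y ^ (4 - 4*r) := step1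
      _ ≤ ((1 - (2 - 4*r)) * y ^ (2:ℝ) + (2 - 4*r) * y)
          + ((1 - (2 - 4*r)) * y ^ (2:ℝ) + (2 - 4*r) * y ^ (3:ℝ)) := by
          have := add_le_add i1 i2
          linarith
      _ = (1 - 2*r - r1) * (1 + y ^ (4:ℝ)) + 2*(2*r - r1) * y ^ (2:ℝ)
          + 2*r1 * (y + y ^ (3:ℝ)) := by
          rw [hr1v]; ring

end Aux

theorem stmt_12 {n : ℕ} (A B : Matrix (Fin n) (Fin n) ℂ) (m m' M M' v h r r1 rh1 : ℝ)
    (hA : A.PosDef) (hB : B.PosDef)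
    (hm' : 0 < m') (hm : 0 < m) (hM : 0 < M) (hM' : 0 < M') (hmM : m < M)
    (hcond : (loewner ((m' : ℂ) • 1) A ∧ loewner A ((m : ℂ) • 1) ∧
        loewner ((M : ℂ) • 1) B ∧ loewner B ((M' : ℂ) • 1)) ∨
      (loewner ((m' : ℂ) • 1) B ∧ loewner B ((m : ℂ) • 1) ∧
        loewner ((M : ℂ) • 1) A ∧ loewner A ((M' : ℂ) • 1)))
    (hh : h = M / m) (hr : r = min v (1 - v))
    (hr1 : r1 = min (2 * r) (1 - 2 * r)) (hrh1 : rh1 = min (2 * r1) (1 - 2 * r1))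
    (hv0 : 0 < v) (hv : v < 1) :
    loewner
      (((2 * r : ℝ) : ℂ) • (anabla (1 / 2) A B - asharp (1 / 2) A B)
        + ((r1 : ℝ) : ℂ) • (anabla (1 / 2) A B + asharp (1 / 2) A B - (2 : ℂ) • heinz (1 / 4) A B)
        + ((Kant (h ^ ((1 : ℝ) / 4)) ^ rh1 : ℝ) : ℂ) • heinz v A B)
      (anabla (1 / 2) A B) := by
  -- basic setup
  set S := mrpow A (-(1 / 2)) with hS_def
  set Q := mrpow A (1 / 2) with hQ_def
  set T := S * B * S with hT_def
  have hSH : S.IsHermitian := mrpow_isHermitian hA.1 _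
  have hQH : Q.IsHermitian := mrpow_isHermitian hA.1 _
  have hQS : Q * S = 1 := by
    rw [hQ_def, hS_def, mrpow_mul_mrpow hA, show (1/2 + -(1/2) : ℝ) = 0 by norm_num,
      mrpow_zero hA.1]
  have hSQ : S * Q = 1 := by
    rw [hQ_def, hS_def, mrpow_mul_mrpow hA, show (-(1/2) + 1/2 : ℝ) = 0 by norm_num,
      mrpow_zero hA.1]
  have hQQ : Q * Q = A := by
    rw [hQ_def, mrpow_mul_mrpow hA, show (1/2 + 1/2 : ℝ) = 1 by norm_num, mrpow_one hA.1]
  have hSS : S * S = mrpow A (-1) := by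
    rw [hS_def, mrpow_mul_mrpow hA, show (-(1/2) + -(1/2) : ℝ) = -1 by norm_num]
  set P := mrpow A (-1) with hP_def
  have hSAS : S * A * S = 1 := by
    rw [← hQQ, show S * (Q * Q) * S = (S * Q) * (Q * S) by noncomm_ring, hSQ, hQS, one_mul]
  have hBT : B = Q * T * Q := by
    rw [hT_def, show Q * (S * B * S) * Q = (Q * S) * B * (S * Q) by noncomm_ring,
      hQS, hSQ, one_mul, mul_one]
  have hTH : T.IsHermitian := by
    rw [hT_def]
    show (S * B * S)ᴴ = S * B * S
    rw [Matrix.conjTranspose_mul, Matrix.conjTranspose_mul, hSH.eq, hB.1.eq, mul_assoc]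
  have hconj : ∀ X : Matrix (Fin n) (Fin n) ℂ, X.PosSemidef → (S * X * S).PosSemidef := by
    intro X hX
    have := hX.mul_mul_conjTranspose_same S
    rwa [hSH.eq] at this
  have hh1 : 1 < h := by rw [hh]; exact (one_lt_div hm).2 hmM
  -- helper conjugation computations
  have hS1S : S * (1 : Matrix (Fin n) (Fin n) ℂ) * S = P := by rw [mul_one, hSS]
  have hcsub : ∀ (X Y : Matrix (Fin n) (Fin n) ℂ), S * (X - Y) * S = S * X * S - S * Y * S := by
    intro X Y; rw [mul_sub, sub_mul]
  have hcsmul : ∀ (c : ℝ) (X : Matrix (Fin n) (Fin n) ℂ),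
      S * ((c : ℂ) • X) * S = (c : ℂ) • (S * X * S) := by
    intro c X; rw [mul_smul_comm, smul_mul_assoc]
  -- eigenvalue bounds
  have hlam : (∀ i, 0 < hTH.eigenvalues i) ∧
      (∀ i, h ≤ hTH.eigenvalues i ∨ hTH.eigenvalues i ≤ h⁻¹) := by
    rcases hcond with ⟨c1, c2, c3, c4⟩ | ⟨c1, c2, c3, c4⟩
    · -- m'I ≤ A ≤ mI < MI ≤ B ≤ M'I  : T ≥ h
      have p2 : ((m : ℂ) • P - 1).PosSemidef := by
        have := hconj _ c2
        rwa [hcsub, hcsmul, hS1S, hSAS] at this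
      have p3 : (T - (M : ℂ) • P).PosSemidef := by
        have := hconj _ c3
        rwa [hcsub, hcsmul, hS1S, ← hT_def] at this
      have key : (T - (h : ℂ) • 1).PosSemidef := by
        have hid : T - (h : ℂ) • 1 = (T - (M : ℂ) • P) + ((M/m : ℝ) : ℂ) • ((m : ℂ) • P - 1) := by
          rw [smul_sub, smul_smul, show ((M/m : ℝ) : ℂ) * ((m : ℝ) : ℂ) = ((M : ℝ) : ℂ) by
            push_cast; field_simp, hh]
          push_cast
          abel
        rw [hid]
        exact p3.add (psd_smul p2 (by positivity))
      have hge := eig_ge hTH h key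
      exact ⟨fun i => lt_of_lt_of_le (by linarith) (hge i), fun i => Or.inl (hge i)⟩
    · -- m'I ≤ B ≤ mI < MI ≤ A ≤ M'I : T ≤ 1/h, T ≥ m'/M'
      have p1 : (T - (m' : ℂ) • P).PosSemidef := by
        have := hconj _ c1
        rwa [hcsub, hcsmul, hS1S, ← hT_def] at this
      have p2 : ((m : ℂ) • P - T).PosSemidef := by
        have := hconj _ c2
        rwa [hcsub, hcsmul, hS1S, ← hT_def] at this
      have p3 : ((1 : Matrix (Fin n) (Fin n) ℂ) - (M : ℂ) • P).PosSemidef := by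
        have := hconj _ c3
        rwa [hcsub, hcsmul, hS1S, hSAS] at this
      have p4 : ((M' : ℂ) • P - 1).PosSemidef := by
        have := hconj _ c4
        rwa [hcsub, hcsmul, hS1S, hSAS] at this
      have keyup : ((h⁻¹ : ℝ) : ℂ) • 1 - T |>.PosSemidef := by
        have hid : ((h⁻¹ : ℝ) : ℂ) • (1 : Matrix (Fin n) (Fin n) ℂ) - T
            = ((m : ℂ) • P - T) + ((m/M : ℝ) : ℂ) • (1 - (M : ℂ) • P) := by
          rw [smul_sub, smul_smul, show ((m/M : ℝ) : ℂ) * ((M : ℝ) : ℂ) = ((m : ℝ) : ℂ) by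
            push_cast; field_simp, show (h⁻¹ : ℝ) = m / M by rw [hh]; field_simp]
          push_cast
          abel
        rw [hid]
        exact p2.add (psd_smul p3 (by positivity))
      have keylo : (T - ((m'/M' : ℝ) : ℂ) • 1).PosSemidef := by
        have hid : T - ((m'/M' : ℝ) : ℂ) • (1 : Matrix (Fin n) (Fin n) ℂ)
            = (T - (m' : ℂ) • P) + ((m'/M' : ℝ) : ℂ) • ((M' : ℂ) • P - 1) := by
          rw [smul_sub, smul_smul, show ((m'/M' : ℝ) : ℂ) * ((M' : ℝ) : ℂ) = ((m' : ℝ) : ℂ) by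
            push_cast; field_simp]
          push_cast
          abel
        rw [hid]
        exact p1.add (psd_smul p4 (by positivity))
      refine ⟨fun i => ?_, fun i => Or.inr (eig_le hTH _ keyup i)⟩
      have := eig_ge hTH _ keylo i
      have hq : 0 < m'/M' := by positivity
      linarith
  obtain ⟨hlam_pos, hlam_case⟩ := hlam
  -- eigendecomposition of T
  have hmr : ∀ t : ℝ, mrpow T t
      = (hTH.eigenvectorUnitary : Matrix (Fin n) (Fin n) ℂ)
        * Matrix.diagonal (fun i => ((hTH.eigenvalues i ^ t : ℝ) : ℂ))
        * star (hTH.eigenvectorUnitary : Matrix (Fin n) (Fin n) ℂ) := mrpow_eq hTH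
  set lam := hTH.eigenvalues with hlam_def
  set V := (hTH.eigenvectorUnitary : Matrix (Fin n) (Fin n) ℂ) with hV_def
  -- cdq representations
  have hA_cdq : A = cdq Q V (fun i => lam i ^ (0:ℝ)) := by
    unfold cdq
    rw [show Matrix.diagonal (fun i => ((lam i ^ (0:ℝ) : ℝ) : ℂ)) = 1 by
      rw [show (fun i => ((lam i ^ (0:ℝ) : ℝ) : ℂ)) = fun _ => 1 by
        funext i; norm_num, Matrix.diagonal_one]]
    rw [mul_one, unitary_mul_star_self hTH, mul_one, hQQ]
  have hB_cdq : B = cdq Q V (fun i => lam i ^ (1:ℝ)) := by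
    unfold cdq
    rw [← hmr 1, mrpow_one hTH, ← hBT]
  have hsharp : ∀ w : ℝ, asharp w A B = cdq Q V (fun i => lam i ^ w) := by
    intro w
    show Q * mrpow T w * Q = _
    rw [hmr w]
    rfl
  have hana : anabla (1/2) A B = cdq Q V (fun i => (1 - 1/2) * lam i ^ (0:ℝ) + 1/2 * lam i ^ (1:ℝ)) := by
    show ((1 - 1/2 : ℝ) : ℂ) • A + ((1/2 : ℝ) : ℂ) • B = _
    rw [hA_cdq, hB_cdq, cdq_smul, cdq_smul, cdq_add]
  have hhz : ∀ w : ℝ, heinz w A B = cdq Q V (fun i => 1/2 * (lam i ^ w + lam i ^ (1 - w))) := by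
    intro w
    show ((1/2 : ℝ) : ℂ) • (asharp w A B + asharp (1-w) A B) = _
    rw [hsharp w, hsharp (1-w), cdq_add, cdq_smul]
  -- final combination
  show (anabla (1/2) A B - _).PosSemidef
  have hbig : anabla (1/2) A B
      - (((2 * r : ℝ) : ℂ) • (anabla (1 / 2) A B - asharp (1 / 2) A B)
        + ((r1 : ℝ) : ℂ) • (anabla (1 / 2) A B + asharp (1 / 2) A B - (2 : ℂ) • heinz (1 / 4) A B)
        + ((Kant (h ^ ((1 : ℝ) / 4)) ^ rh1 : ℝ) : ℂ) • heinz v A B)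
      = cdq Q V (fun i =>
          ((1 - 1/2) * lam i ^ (0:ℝ) + 1/2 * lam i ^ (1:ℝ))
          - ((2 * r) * (((1 - 1/2) * lam i ^ (0:ℝ) + 1/2 * lam i ^ (1:ℝ)) - lam i ^ ((1:ℝ)/2))
            + r1 * ((((1 - 1/2) * lam i ^ (0:ℝ) + 1/2 * lam i ^ (1:ℝ)) + lam i ^ ((1:ℝ)/2))
                - 2 * (1/2 * (lam i ^ ((1:ℝ)/4) + lam i ^ (1 - (1:ℝ)/4))))
            + (Kant (h ^ ((1 : ℝ) / 4)) ^ rh1) * (1/2 * (lam i ^ v + lam i ^ (1 - v))))) := by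
    rw [hana, hsharp (1/2), hhz (1/4), hhz v,
      show (2 : ℂ) = ((2 : ℝ) : ℂ) by norm_num, cdq_smul, cdq_sub, cdq_smul, cdq_add, cdq_sub,
      cdq_smul, cdq_smul, cdq_add, cdq_add, cdq_sub]
  rw [hbig]
  refine cdq_posSemidef hQH _ (fun i => ?_)
  have hs := scalar_main hh1 (hlam_pos i) (hlam_case i) hv0 hv hr hr1 hrh1
  simp only [Real.rpow_zero, Real.rpow_one]
  rw [show (1 : ℝ) - (1:ℝ)/4 = (3:ℝ)/4 by norm_num]
  linarith [hs]
end

section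
/- Let A, B be n×n positive definite complex matrices, let v ∈ (0,1), and let m, m', M, M' be positive reals satisfying either m'·I ≤ A ≤ m·I < M·I ≤ B ≤ M'·I or m'·I ≤ B ≤ m·I < M·I ≤ A ≤ M'·I in the Loewner order. Then A∇B ≤ 2R(A∇B − A#B) − r₁(A∇B + A#B − 2H_{1/4}(A, B)) + K(h^{1/4}, 2)^{−r̂₁} · H_v(A, B) in the Loewner order, where h = M/m, r = min{v, 1 − v}, R = max{v, 1 − v}, r₁ = min{2r, 1 − 2r} and r̂₁ = min{2r₁, 1 − 2r₁}. -/
set_option maxHeartbeats 2000000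


open Matrix
open scoped ComplexOrder

noncomputable def Ee (lam k : ℝ) : ℝ := (lam ^ k + lam ^ (-k)) / 2

lemma Ee_one_le {lam : ℝ} (hlam : 0 < lam) (k : ℝ) : 1 ≤ Ee lam k := by
  have h1 : 0 < lam ^ k := Real.rpow_pos_of_pos hlam k
  have h2 : lam ^ (-k) = (lam ^ k)⁻¹ := Real.rpow_neg hlam.le k
  have h3 : lam ^ k * (lam ^ k)⁻¹ = 1 := mul_inv_cancel₀ (ne_of_gt h1)
  have h4 : 0 < (lam ^ k)⁻¹ := inv_pos.mpr h1
  rw [Ee, h2]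
  nlinarith [sq_nonneg (lam ^ k - 1)]

lemma Ee_pos {lam : ℝ} (hlam : 0 < lam) (k : ℝ) : 0 < Ee lam k :=
  lt_of_lt_of_le one_pos (Ee_one_le hlam k)

lemma Ee_mul {lam : ℝ} (hlam : 0 < lam) (j k : ℝ) :
    Ee lam j * Ee lam k = (Ee lam (j + k) + Ee lam (j - k)) / 2 := by
  have e : ∀ a b : ℝ, lam ^ (a + b) = lam ^ a * lam ^ b := fun a b => Real.rpow_add hlam a b
  have e1 : lam ^ (j + k) = lam ^ j * lam ^ k := e j k
  have e2 : lam ^ (-(j + k)) = lam ^ (-j) * lam ^ (-k) := by rw [show -(j+k) = -j + -k by ring, e]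
  have e3 : lam ^ (j - k) = lam ^ j * lam ^ (-k) := by rw [show j - k = j + -k by ring, e]
  have e4 : lam ^ (-(j - k)) = lam ^ (-j) * lam ^ k := by rw [show -(j-k) = -j + k by ring, e]
  simp only [Ee, e1, e2, e3, e4]
  ring

lemma bern {X : ℝ} (p : ℝ) (hX : 0 ≤ X) (hp0 : 0 ≤ p) (hp : p ≤ 1/2) :
    ((1 + X)/2) ^ (2*p) ≤ (1 - p) + p * X := by
  have h := Real.geom_mean_le_arith_mean2_weighted (by linarith : (0:ℝ) ≤ 2*p)
    (by linarith : (0:ℝ) ≤ 1 - 2*p) (by linarith : (0:ℝ) ≤ (1+X)/2) (zero_le_one) (by ring)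
  rw [Real.one_rpow] at h
  linarith

lemma zsf {lam : ℝ} (hlam : 0 < lam) (p : ℝ) (hp0 : 0 ≤ p) (hp : p ≤ 1/2) :
    (Ee lam (1/8)) ^ (2*p) * Ee lam (p/4) ≤ (1 - p) + p * Ee lam (1/4) := by
  have hs : (0:ℝ) < lam ^ ((1:ℝ)/8) := Real.rpow_pos_of_pos hlam _
  have hs' : (0:ℝ) < lam ^ (-((1:ℝ)/8)) := Real.rpow_pos_of_pos hlam _
  have hc : 0 < Ee lam (1/8) := Ee_pos hlam _
  have i1 : (1 + lam ^ ((1:ℝ)/4))/2 = lam ^ ((1:ℝ)/8) * Ee lam (1/8) := by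
    rw [Ee]
    have k1 : lam ^ ((1:ℝ)/8) * lam ^ (-((1:ℝ)/8)) = 1 := by
      rw [← Real.rpow_add hlam]; norm_num
    have k2 : lam ^ ((1:ℝ)/8) * lam ^ ((1:ℝ)/8) = lam ^ ((1:ℝ)/4) := by
      rw [← Real.rpow_add hlam]; norm_num
    field_simp
    nlinarith [k1, k2]
  have i2 : (1 + lam ^ (-((1:ℝ)/4)))/2 = lam ^ (-((1:ℝ)/8)) * Ee lam (1/8) := by
    rw [Ee]
    have k1 : lam ^ (-((1:ℝ)/8)) * lam ^ ((1:ℝ)/8) = 1 := by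
      rw [← Real.rpow_add hlam]; norm_num
    have k2 : lam ^ (-((1:ℝ)/8)) * lam ^ (-((1:ℝ)/8)) = lam ^ (-((1:ℝ)/4)) := by
      rw [← Real.rpow_add hlam]; norm_num
    field_simp
    nlinarith [k1, k2]
  have b1 := bern (X := lam ^ ((1:ℝ)/4)) p (le_of_lt (Real.rpow_pos_of_pos hlam _)) hp0 hp
  have b2 := bern (X := lam ^ (-((1:ℝ)/4))) p (le_of_lt (Real.rpow_pos_of_pos hlam _)) hp0 hp
  rw [i1, Real.mul_rpow hs.le hc.le] at b1
  rw [i2, Real.mul_rpow hs'.le hc.le] at b2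
  have j1 : (lam ^ ((1:ℝ)/8)) ^ (2*p) = lam ^ (p/4) := by
    rw [← Real.rpow_mul hlam.le, show (1:ℝ)/8 * (2*p) = p/4 by ring]
  have j2 : (lam ^ (-((1:ℝ)/8))) ^ (2*p) = lam ^ (-(p/4)) := by
    rw [← Real.rpow_mul hlam.le, show -((1:ℝ)/8) * (2*p) = -(p/4) by ring]
  rw [j1] at b1
  rw [j2] at b2
  have u1 : Ee lam (p/4) = (lam ^ (p/4) + lam ^ (-(p/4)))/2 := rfl
  have u2 : Ee lam (1/4) = (lam ^ ((1:ℝ)/4) + lam ^ (-((1:ℝ)/4)))/2 := rfl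
  rw [u1, u2]
  linarith

lemma step (x Ep Em P Q : ℝ) (hx : 0 ≤ x) (hEp : 1 ≤ Ep) (hEm : 1 ≤ Em)
    (hz : x * Ep ≤ P) (hPQ : P * Q ≤ Em * Ep) : Q * x ≤ Em := by
  rcases le_or_gt Q 0 with hQ | hQ
  · have h0 : Q * x ≤ 0 := mul_nonpos_of_nonpos_of_nonneg hQ hx
    linarith
  · have h1 : x * Ep * Q ≤ P * Q := mul_le_mul_of_nonneg_right hz hQ.le
    have hEp0 : 0 < Ep := by linarith
    have h2 : Q * x * Ep ≤ Em * Ep := by nlinarith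
    exact le_of_mul_le_mul_right h2 hEp0

lemma sq_rpow (c : ℝ) (hc : 0 ≤ c) (t : ℝ) : (c^2) ^ t = c ^ (2*t) := by
  rw [← Real.rpow_natCast c 2, ← Real.rpow_mul hc]
  norm_num

lemma Eform {lam : ℝ} (hlam : 0 < lam) (μ K : ℝ) (hμ0 : 0 ≤ μ) (hμ1 : μ ≤ 1)
    (hK1 : 1 ≤ K) (hKc : K ≤ Ee lam (1/8) ^ 2) :
    (1+μ) - μ * Ee lam (1/2) + (min μ (1-μ)) * (Ee lam (1/2) + 1 - 2 * Ee lam (1/4))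
      ≤ K ^ (-(min (2 * min μ (1-μ)) (1 - 2 * min μ (1-μ)))) * Ee lam (μ/2) := by
  have hc1 : 1 ≤ Ee lam (1/8) := Ee_one_le hlam _
  have hc0 : (0:ℝ) ≤ Ee lam (1/8) := by linarith
  have hd : (0:ℝ) ≤ Ee lam (1/8)^2 - 1 := by nlinarith
  have hEm1 : 1 ≤ Ee lam (μ/2) := Ee_one_le hlam _
  -- identities
  have h88 := Ee_mul hlam (1/8) (1/8)
  rw [show (1:ℝ)/8 + 1/8 = 1/4 by norm_num, show (1:ℝ)/8 - 1/8 = 0 by norm_num] at h88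
  have hE0 : Ee lam 0 = 1 := by simp [Ee]
  rw [hE0] at h88
  have hE4 : Ee lam (1/4) = 2 * Ee lam (1/8)^2 - 1 := by nlinarith [h88]
  have h44 := Ee_mul hlam (1/4) (1/4)
  rw [show (1:ℝ)/4 + 1/4 = 1/2 by norm_num, show (1:ℝ)/4 - 1/4 = 0 by norm_num, hE0] at h44
  have hE2 : Ee lam (1/2) = 8 * Ee lam (1/8)^4 - 8 * Ee lam (1/8)^2 + 1 := by nlinarith [h44, hE4]
  -- nonnegativity of the exponent
  have hrr0 : 0 ≤ min μ (1-μ) := le_min hμ0 (by linarith)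
  have hrr2 : min μ (1-μ) ≤ 1/2 := by
    rcases le_total μ (1-μ) with h | h
    · rw [min_eq_left h]; linarith
    · rw [min_eq_right h]; linarith
  have hrh0 : 0 ≤ min (2 * min μ (1-μ)) (1 - 2 * min μ (1-μ)) :=
    le_min (by linarith) (by linarith)
  have hK0 : (0:ℝ) < K := by linarith
  -- reduce to the (c²)^rh form
  suffices hs : ((1+μ) - μ * Ee lam (1/2) + (min μ (1-μ)) * (Ee lam (1/2) + 1 - 2 * Ee lam (1/4)))
      * (Ee lam (1/8)^2) ^ (min (2 * min μ (1-μ)) (1 - 2 * min μ (1-μ))) ≤ Ee lam (μ/2) by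
    set rh := min (2 * min μ (1-μ)) (1 - 2 * min μ (1-μ)) with hrhdef
    have hc2pos : (0:ℝ) < Ee lam (1/8)^2 := by nlinarith
    have hXpos : (0:ℝ) < (Ee lam (1/8)^2) ^ rh := Real.rpow_pos_of_pos hc2pos _
    have hmono : (Ee lam (1/8)^2) ^ (-rh) ≤ K ^ (-rh) :=
      Real.rpow_le_rpow_of_nonpos hK0 hKc (neg_nonpos.mpr hrh0)
    have e1 : (Ee lam (1/8)^2) ^ (-rh) = ((Ee lam (1/8)^2) ^ rh)⁻¹ :=
      Real.rpow_neg hc2pos.le _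
    have h2 : (1+μ) - μ * Ee lam (1/2) + (min μ (1-μ)) * (Ee lam (1/2) + 1 - 2 * Ee lam (1/4))
        ≤ (Ee lam (1/8)^2) ^ (-rh) * Ee lam (μ/2) := by
      rw [e1, inv_mul_eq_div, le_div_iff₀ hXpos]
      exact hs
    calc _ ≤ (Ee lam (1/8)^2) ^ (-rh) * Ee lam (μ/2) := h2
      _ ≤ K ^ (-rh) * Ee lam (μ/2) := mul_le_mul_of_nonneg_right hmono (by linarith)
  -- four regions
  rcases le_or_gt μ (1/4) with h14 | h14
  · -- region a : μ ∈ [0, 1/4], exponent 2μ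
    have hrrv : min μ (1-μ) = μ := min_eq_left (by linarith)
    rw [hrrv]
    have hrhv : min (2*μ) (1 - 2*μ) = 2*μ := min_eq_left (by linarith)
    rw [hrhv]
    have hXe : ((Ee lam (1/8)^2 : ℝ)) ^ (2*μ) = Ee lam (1/8) ^ (2*(2*μ)) := by
      rw [sq_rpow _ hc0, show (2:ℝ)*(2*μ) = 2*(2*μ) by ring]
    rw [hXe]
    have hz := zsf hlam (2*μ) (by linarith) (by linarith)
    rw [show (2*μ)/4 = μ/2 by ring] at hz
    have hEm2 : 1 ≤ Ee lam (μ/2) * Ee lam (μ/2) := by nlinarith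
    refine step _ _ _ ((1 - 2*μ) + 2*μ * Ee lam (1/4)) _
      (Real.rpow_nonneg hc0 _) hEm1 hEm1 hz ?_
    rw [hE4]
    nlinarith [sq_nonneg (μ * (Ee lam (1/8)^2 - 1))]
  rcases le_or_gt μ (1/2) with h12 | h12
  · -- region b : μ ∈ (1/4, 1/2], exponent 1-2μ
    have hrrv : min μ (1-μ) = μ := min_eq_left (by linarith)
    rw [hrrv]
    have hrhv : min (2*μ) (1 - 2*μ) = 1 - 2*μ := min_eq_right (by linarith)
    rw [hrhv]
    have hXe : ((Ee lam (1/8)^2 : ℝ)) ^ (1-2*μ) = Ee lam (1/8) ^ (2*(1-2*μ)) := by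
      rw [sq_rpow _ hc0, show (2:ℝ)*(1-2*μ) = 2*(1-2*μ) by ring]
    rw [hXe]
    have hz := zsf hlam (1-2*μ) (by linarith) (by linarith)
    have hprod := Ee_mul hlam (μ/2) ((1-2*μ)/4)
    rw [show μ/2 + (1-2*μ)/4 = 1/4 by ring, show μ/2 - (1-2*μ)/4 = μ - 1/4 by ring] at hprod
    have hEp1 : 1 ≤ Ee lam ((1-2*μ)/4) := Ee_one_le hlam _
    have hEa1 : 1 ≤ Ee lam (μ - 1/4) := Ee_one_le hlam _
    refine step _ _ _ ((1 - (1-2*μ)) + (1-2*μ) * Ee lam (1/4)) _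
      (Real.rpow_nonneg hc0 _) hEp1 hEm1 hz ?_
    rw [hprod, hE4]
    nlinarith [mul_nonneg (by linarith : (0:ℝ) ≤ 8*μ - 2) hd,
      mul_nonneg (mul_nonneg (by nlinarith : (0:ℝ) ≤ 8*μ*(1-2*μ)) hd) hd]
  rcases le_or_gt μ (3/4) with h34 | h34
  · -- region c : μ ∈ (1/2, 3/4], exponent 2μ-1
    have hrrv : min μ (1-μ) = 1-μ := min_eq_right (by linarith)
    rw [hrrv]
    have hrhv : min (2*(1-μ)) (1 - 2*(1-μ)) = 1 - 2*(1-μ) := min_eq_right (by linarith)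
    rw [hrhv]
    have hXe : ((Ee lam (1/8)^2 : ℝ)) ^ (1-2*(1-μ)) = Ee lam (1/8) ^ (2*(2*μ-1)) := by
      rw [← Real.rpow_natCast (Ee lam (1/8)) 2, ← Real.rpow_mul hc0]
      norm_num; ring_nf
    rw [hXe]
    have hz := zsf hlam (2*μ-1) (by linarith) (by linarith)
    have hprod := Ee_mul hlam (μ/2) ((2*μ-1)/4)
    rw [show μ/2 + (2*μ-1)/4 = μ - 1/4 by ring, show μ/2 - (2*μ-1)/4 = 1/4 by ring] at hprod
    have hEp1 : 1 ≤ Ee lam ((2*μ-1)/4) := Ee_one_le hlam _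
    have hEa1 : 1 ≤ Ee lam (μ - 1/4) := Ee_one_le hlam _
    refine step _ _ _ ((1 - (2*μ-1)) + (2*μ-1) * Ee lam (1/4)) _
      (Real.rpow_nonneg hc0 _) hEp1 hEm1 hz ?_
    rw [hprod, hE2, hE4]
    nlinarith [mul_nonneg (by linarith : (0:ℝ) ≤ 8*μ - 2) hd,
      mul_nonneg (mul_nonneg (by nlinarith : (0:ℝ) ≤ 24*μ*(2*μ-1)) hd) hd,
      mul_nonneg (mul_nonneg (mul_nonneg (sq_nonneg (2*μ-1)) hd) hd) hd]
  · -- region d : μ ∈ (3/4, 1], exponent 2(1-μ)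
    have hrrv : min μ (1-μ) = 1-μ := min_eq_right (by linarith)
    rw [hrrv]
    have hrhv : min (2*(1-μ)) (1 - 2*(1-μ)) = 2*(1-μ) := min_eq_left (by linarith)
    rw [hrhv]
    have hXe : ((Ee lam (1/8)^2 : ℝ)) ^ (2*(1-μ)) = Ee lam (1/8) ^ (2*(2-2*μ)) := by
      rw [← Real.rpow_natCast (Ee lam (1/8)) 2, ← Real.rpow_mul hc0]
      norm_num; ring_nf
    rw [hXe]
    have hz := zsf hlam (2-2*μ) (by linarith) (by linarith)
    have hprod := Ee_mul hlam (μ/2) ((2-2*μ)/4)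
    rw [show μ/2 + (2-2*μ)/4 = 1/2 by ring, show μ/2 - (2-2*μ)/4 = μ - 1/2 by ring] at hprod
    have hEp1 : 1 ≤ Ee lam ((2-2*μ)/4) := Ee_one_le hlam _
    have hEa1 : 1 ≤ Ee lam (μ - 1/2) := Ee_one_le hlam _
    refine step _ _ _ ((1 - (2-2*μ)) + (2-2*μ) * Ee lam (1/4)) _
      (Real.rpow_nonneg hc0 _) hEp1 hEm1 hz ?_
    rw [hprod, hE2, hE4]
    nlinarith [mul_nonneg (by linarith : (0:ℝ) ≤ 16*μ - 4) hd,
      mul_nonneg (mul_nonneg (mul_nonneg (by linarith : (0:ℝ) ≤ 4*μ - 3) (by linarith : (0:ℝ) ≤ 1 - μ)) hd) hd,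
      mul_nonneg (mul_nonneg (mul_nonneg (mul_nonneg (by linarith : (0:ℝ) ≤ 4 - 4*μ) (by linarith : (0:ℝ) ≤ 16*μ - 8)) hd) hd) hd,
      mul_nonneg hd hd, hEa1]

lemma scalar_final {lam h : ℝ} (v r R r1 rh1 : ℝ) (hlam : 0 < lam) (hh1 : 1 < h)
    (hcase : h ≤ lam ∨ lam ≤ 1/h)
    (hr : r = min v (1-v)) (hr1 : r1 = min (2*r) (1-2*r))
    (hrh1 : rh1 = min (2*r1) (1-2*r1)) (hR : R = max v (1-v))
    (hv0 : 0 < v) (hv1 : v < 1) :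
    (1+lam)/2 ≤ 2*R*((1+lam)/2 - lam ^ ((1:ℝ)/2))
      - r1*((1+lam)/2 + lam ^ ((1:ℝ)/2) - (lam ^ ((1:ℝ)/4) + lam ^ ((3:ℝ)/4)))
      + Kant (h ^ ((1:ℝ)/4)) ^ (-rh1) * ((lam ^ v + lam ^ (1-v))/2) := by
  have hh0 : (0:ℝ) < h := by linarith
  have hrpos : 0 < r := by rw [hr]; exact lt_min hv0 (by linarith)
  have hrhalf : r ≤ 1/2 := by
    rw [hr]; rcases le_total v (1-v) with hc | hc
    · rw [min_eq_left hc]; linarith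
    · rw [min_eq_right hc]; linarith
  have hRr : R = 1 - r := by
    rw [hR, hr]; rcases le_total v (1-v) with hc | hc
    · rw [min_eq_left hc, max_eq_right hc]
    · rw [min_eq_right hc, max_eq_left hc]; ring
  set μ := 1 - 2*r with hμdef
  have hμ0 : 0 ≤ μ := by simp only [hμdef]; linarith
  have hμ1 : μ ≤ 1 := by simp only [hμdef]; linarith
  -- the Kantorovich constant bounds
  have hu1 : (1:ℝ) ≤ h ^ ((1:ℝ)/8) := by
    have := Real.rpow_le_rpow (by norm_num : (0:ℝ) ≤ 1) hh1.le (by norm_num : (0:ℝ) ≤ 1/8)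
    rwa [Real.one_rpow] at this
  set u := h ^ ((1:ℝ)/8) with hudef
  have hu0 : 0 < u := by linarith
  set w := lam ^ ((1:ℝ)/8) with hwdef
  have hw0 : 0 < w := Real.rpow_pos_of_pos hlam _
  have hEw : Ee lam (1/8) = (w + w⁻¹)/2 := by
    rw [Ee, hwdef, Real.rpow_neg hlam.le]
  have hKu : Kant (h ^ ((1:ℝ)/4)) = ((u + u⁻¹)/2)^2 := by
    have e1 : h ^ ((1:ℝ)/4) = u^2 := by
      rw [hudef, ← Real.rpow_natCast (h ^ ((1:ℝ)/8)) 2, ← Real.rpow_mul hh0.le]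
      norm_num
    rw [Kant, e1]
    have : u ≠ 0 := ne_of_gt hu0
    field_simp
    ring
  have hmono : u + u⁻¹ ≤ w + w⁻¹ := by
    rcases hcase with hc | hc
    · have hwu : u ≤ w := Real.rpow_le_rpow hh0.le hc (by norm_num)
      have key : 0 ≤ (w - u) * (u*w - 1) :=
        mul_nonneg (by linarith) (by nlinarith)
      have iden : (w + w⁻¹) - (u + u⁻¹) = (w - u) * (u*w - 1) * (u⁻¹ * w⁻¹) := by
        field_simp
        ring
      nlinarith [mul_nonneg key (by positivity : (0:ℝ) ≤ u⁻¹ * w⁻¹)]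
    · have hwu : w ≤ u⁻¹ := by
        have h1 : lam ^ ((1:ℝ)/8) ≤ (h⁻¹) ^ ((1:ℝ)/8) := by
          apply Real.rpow_le_rpow hlam.le _ (by norm_num)
          rwa [← one_div]
        rwa [Real.inv_rpow hh0.le] at h1
      have huw : u ≤ w⁻¹ := by
        rw [inv_eq_one_div, le_div_iff₀ hw0]
        calc u * w ≤ u * u⁻¹ := by
              exact mul_le_mul_of_nonneg_left hwu hu0.le
          _ = 1 := mul_inv_cancel₀ (ne_of_gt hu0)
      have hw1 : 1 ≤ w⁻¹ := le_trans hu1 huw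
      have key : 0 ≤ (w⁻¹ - u) * (u*w⁻¹ - 1) :=
        mul_nonneg (by linarith) (by nlinarith)
      have iden : (w + w⁻¹) - (u + u⁻¹) = (w⁻¹ - u) * (u*w⁻¹ - 1) * (u⁻¹ * w) := by
        field_simp
        ring
      nlinarith [mul_nonneg key (by positivity : (0:ℝ) ≤ u⁻¹ * w)]
  have hK1 : 1 ≤ Kant (h ^ ((1:ℝ)/4)) := by
    rw [hKu]
    have : 0 ≤ ((u - u⁻¹)/2)^2 := sq_nonneg _
    have e2 : u * u⁻¹ = 1 := mul_inv_cancel₀ (ne_of_gt hu0)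
    nlinarith
  have hKc : Kant (h ^ ((1:ℝ)/4)) ≤ Ee lam (1/8) ^ 2 := by
    rw [hKu, hEw]
    have h1 : 0 ≤ (u + u⁻¹)/2 := by positivity
    have h2 : (u + u⁻¹)/2 ≤ (w + w⁻¹)/2 := by linarith
    exact pow_le_pow_left₀ h1 h2 2
  have heform := Eform hlam μ (Kant (h ^ ((1:ℝ)/4))) hμ0 hμ1 hK1 hKc
  have hr1' : min μ (1-μ) = r1 := by
    rw [hr1, hμdef, show (1:ℝ) - (1 - 2*r) = 2*r by ring, min_comm]
  rw [hr1', ← hrh1] at heform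
  -- multiply through by lam^(1/2)
  have hs0 : (0:ℝ) < lam ^ ((1:ℝ)/2) := Real.rpow_pos_of_pos hlam _
  have a1 : lam ^ ((1:ℝ)/2) * lam ^ ((1:ℝ)/2) = lam := by
    rw [← Real.rpow_add hlam]; norm_num
  have a2 : lam ^ ((1:ℝ)/2) * lam ^ (-((1:ℝ)/2)) = 1 := by
    rw [← Real.rpow_add hlam]; norm_num
  have a3 : lam ^ ((1:ℝ)/2) * lam ^ ((1:ℝ)/4) = lam ^ ((3:ℝ)/4) := by
    rw [← Real.rpow_add hlam]; norm_num
  have a4 : lam ^ ((1:ℝ)/2) * lam ^ (-((1:ℝ)/4)) = lam ^ ((1:ℝ)/4) := by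
    rw [← Real.rpow_add hlam]; norm_num
  have a5 : lam ^ ((1:ℝ)/2) * lam ^ (μ/2) = lam ^ (1-r) := by
    rw [← Real.rpow_add hlam, hμdef]; ring_nf
  have a6 : lam ^ ((1:ℝ)/2) * lam ^ (-(μ/2)) = lam ^ r := by
    rw [← Real.rpow_add hlam, hμdef]; ring_nf
  have I1 : lam ^ ((1:ℝ)/2) * Ee lam (1/2) = (1+lam)/2 := by
    rw [Ee, show lam ^ ((1:ℝ)/2) * ((lam ^ ((1:ℝ)/2) + lam ^ (-((1:ℝ)/2)))/2)
      = (lam ^ ((1:ℝ)/2) * lam ^ ((1:ℝ)/2) + lam ^ ((1:ℝ)/2) * lam ^ (-((1:ℝ)/2)))/2 by ring,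
      a1, a2]
    ring
  have I2 : lam ^ ((1:ℝ)/2) * Ee lam (1/4) = (lam ^ ((1:ℝ)/4) + lam ^ ((3:ℝ)/4))/2 := by
    rw [Ee, show lam ^ ((1:ℝ)/2) * ((lam ^ ((1:ℝ)/4) + lam ^ (-((1:ℝ)/4)))/2)
      = (lam ^ ((1:ℝ)/2) * lam ^ ((1:ℝ)/4) + lam ^ ((1:ℝ)/2) * lam ^ (-((1:ℝ)/4)))/2 by ring,
      a3, a4]
    ring
  have I3 : lam ^ ((1:ℝ)/2) * Ee lam (μ/2) = (lam ^ v + lam ^ (1-v))/2 := by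
    rw [Ee, show lam ^ ((1:ℝ)/2) * ((lam ^ (μ/2) + lam ^ (-(μ/2)))/2)
      = (lam ^ ((1:ℝ)/2) * lam ^ (μ/2) + lam ^ ((1:ℝ)/2) * lam ^ (-(μ/2)))/2 by ring,
      a5, a6]
    rcases le_total v (1-v) with hc | hc
    · rw [hr, min_eq_left hc]; ring
    · rw [hr, min_eq_right hc, show (1:ℝ) - (1-v) = v by ring]
  have hmul := mul_le_mul_of_nonneg_left heform hs0.le
  rw [show lam ^ ((1:ℝ)/2) * (Kant (h ^ ((1:ℝ)/4)) ^ (-rh1) * Ee lam (μ/2))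
    = Kant (h ^ ((1:ℝ)/4)) ^ (-rh1) * (lam ^ ((1:ℝ)/2) * Ee lam (μ/2)) by ring, I3] at hmul
  rw [show lam ^ ((1:ℝ)/2) * ((1+μ) - μ * Ee lam (1/2) + r1 * (Ee lam (1/2) + 1 - 2 * Ee lam (1/4)))
    = (1+μ) * lam ^ ((1:ℝ)/2) - μ * (lam ^ ((1:ℝ)/2) * Ee lam (1/2))
      + r1 * ((lam ^ ((1:ℝ)/2) * Ee lam (1/2)) + lam ^ ((1:ℝ)/2)
        - 2 * (lam ^ ((1:ℝ)/2) * Ee lam (1/4))) by ring, I1, I2] at hmul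
  rw [hRr]
  simp only [hμdef] at hmul
  linarith [hmul]

/-- `X` is represented in the (not necessarily unitary) frame `P` with real diagonal `f`. -/
def DRep {n : ℕ} (P : Matrix (Fin n) (Fin n) ℂ) (f : Fin n → ℝ) (X : Matrix (Fin n) (Fin n) ℂ) :
    Prop :=
  X = P * Matrix.diagonal (fun i => ((f i : ℝ) : ℂ)) * star P

namespace DRep

variable {n : ℕ} {P X Y : Matrix (Fin n) (Fin n) ℂ} {f g : Fin n → ℝ}

lemma add (h1 : DRep P f X) (h2 : DRep P g Y) : DRep P (fun i => f i + g i) (X + Y) := by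
  unfold DRep at *
  have e : (fun i => ((f i + g i : ℝ) : ℂ))
      = (fun i => ((f i : ℝ) : ℂ) + ((g i : ℝ) : ℂ)) := by
    funext i; push_cast; rfl
  rw [h1, h2, e, ← diagonal_add, Matrix.mul_add, Matrix.add_mul]

lemma sub (h1 : DRep P f X) (h2 : DRep P g Y) : DRep P (fun i => f i - g i) (X - Y) := by
  unfold DRep at *
  have e : (fun i => ((f i - g i : ℝ) : ℂ))
      = (fun i => ((f i : ℝ) : ℂ) - ((g i : ℝ) : ℂ)) := by
    funext i; push_cast; rfl
  rw [h1, h2, e, ← diagonal_sub, Matrix.mul_sub, Matrix.sub_mul]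

lemma smul (c : ℝ) (h1 : DRep P f X) : DRep P (fun i => c * f i) (((c : ℝ) : ℂ) • X) := by
  unfold DRep at *
  have e : (fun i => ((c * f i : ℝ) : ℂ)) = (c : ℂ) • (fun i => ((f i : ℝ) : ℂ)) := by
    funext i; push_cast; rfl
  rw [h1, e, diagonal_smul, Matrix.mul_smul, Matrix.smul_mul]

lemma mul (hP : star P * P = 1) (h1 : DRep P f X) (h2 : DRep P g Y) :
    DRep P (fun i => f i * g i) (X * Y) := by
  unfold DRep at *
  have hmid : star P * (P * (diagonal (fun i => ((g i : ℝ) : ℂ)) * star P))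
      = diagonal (fun i => ((g i : ℝ) : ℂ)) * star P := by
    rw [← Matrix.mul_assoc, hP, Matrix.one_mul]
  have e : (fun i => ((f i * g i : ℝ) : ℂ))
      = (fun i => ((f i : ℝ) : ℂ) * ((g i : ℝ) : ℂ)) := by
    funext i; push_cast; rfl
  rw [h1, h2, e, ← diagonal_mul_diagonal]
  simp only [Matrix.mul_assoc, hmid]

lemma one (hP2 : P * star P = 1) : DRep P (fun _ => (1:ℝ)) (1 : Matrix (Fin n) (Fin n) ℂ) := by
  unfold DRep
  have e : (fun (_ : Fin n) => (((1:ℝ) : ℝ) : ℂ)) = (fun _ => (1:ℂ)) := by funext i; norm_num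
  rw [e, diagonal_one, Matrix.mul_one, hP2]

lemma congr_fun' (h : DRep P f X) (hfg : ∀ i, f i = g i) : DRep P g X := by
  have e : f = g := funext hfg
  unfold DRep at *
  simp only [← e]
  exact h

lemma smul_one (hP2 : P * star P = 1) (c : ℝ) :
    DRep P (fun _ => c) ((c : ℂ) • (1 : Matrix (Fin n) (Fin n) ℂ)) :=
  ((DRep.one (P := P) hP2).smul c).congr_fun' (fun _ => mul_one c)


lemma selfadj (h : DRep P f X) : star X = X := by
  have hD : (diagonal (fun i => ((f i : ℝ) : ℂ)))ᴴ = diagonal (fun i => ((f i : ℝ) : ℂ)) := by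
    have e : (star fun i => ((f i : ℝ) : ℂ)) = fun i => ((f i : ℝ) : ℂ) := by
      funext i
      simp [Pi.star_apply, Complex.star_def, Complex.conj_ofReal]
    rw [diagonal_conjTranspose, e]
  rw [h]
  simp only [Matrix.star_eq_conjTranspose, Matrix.conjTranspose_mul,
    Matrix.conjTranspose_conjTranspose]
  rw [hD, ← Matrix.mul_assoc]

lemma psd (h : DRep P f X) (hf : ∀ i, 0 ≤ f i) : X.PosSemidef := by
  rw [h, Matrix.star_eq_conjTranspose]
  exact PosSemidef.mul_mul_conjTranspose_same
    (posSemidef_diagonal_iff.mpr fun i => Complex.zero_le_real.mpr (hf i)) P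

lemma loewner_of_le (h1 : DRep P f X) (h2 : DRep P g Y) (hle : ∀ i, f i ≤ g i) :
    loewner X Y :=
  (h2.sub h1).psd fun i => by linarith [hle i]

lemma eig_le (hP : star P * P = 1) (h1 : DRep P f X) (h2 : DRep P g Y) (hL : loewner X Y) :
    ∀ i, f i ≤ g i := by
  intro i
  have hsub : DRep P (fun i => g i - f i) (Y - X) := h2.sub h1
  have hpsd : (Y - X).PosSemidef := hL
  rw [hsub] at hpsd
  dsimp only at hpsd
  have h3 := hpsd.conjTranspose_mul_mul_same P
  rw [← Matrix.star_eq_conjTranspose] at h3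
  rw [Matrix.mul_assoc P, ← Matrix.mul_assoc (star P), hP, Matrix.one_mul,
    Matrix.mul_assoc, hP, Matrix.mul_one] at h3
  have := posSemidef_diagonal_iff.mp h3 i
  have h4 : (0:ℝ) ≤ g i - f i := Complex.zero_le_real.mp this
  linarith

end DRep

lemma loewner_trans {n : ℕ} {X Y Z : Matrix (Fin n) (Fin n) ℂ}
    (h1 : loewner X Y) (h2 : loewner Y Z) : loewner X Z := by
  have := Matrix.PosSemidef.add h2 h1
  simpa [loewner] using this

lemma loewner_conj {n : ℕ} {X Y : Matrix (Fin n) (Fin n) ℂ} (Q : Matrix (Fin n) (Fin n) ℂ)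
    (hL : loewner X Y) : loewner (star Q * X * Q) (star Q * Y * Q) := by
  unfold loewner at *
  have h := hL.conjTranspose_mul_mul_same Q
  rw [← Matrix.star_eq_conjTranspose] at h
  have e : star Q * (Y - X) * Q = star Q * Y * Q - star Q * X * Q := by
    rw [Matrix.mul_sub, Matrix.sub_mul]
  rwa [e] at h

lemma mrpow_spec {n : ℕ} {A : Matrix (Fin n) (Fin n) ℂ} (hAH : A.IsHermitian) (t : ℝ) :
    DRep (hAH.eigenvectorUnitary : Matrix (Fin n) (Fin n) ℂ)
      (fun i => hAH.eigenvalues i ^ t) (mrpow A t) := by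
  unfold DRep mrpow
  rw [dif_pos hAH]

lemma spec_rep {n : ℕ} {A : Matrix (Fin n) (Fin n) ℂ} (hAH : A.IsHermitian) :
    DRep (hAH.eigenvectorUnitary : Matrix (Fin n) (Fin n) ℂ) hAH.eigenvalues A := by
  unfold DRep
  have := hAH.spectral_theorem
  rw [Unitary.conjStarAlgAut_apply] at this
  exact this

theorem stmt_15 {n : ℕ} (A B : Matrix (Fin n) (Fin n) ℂ) (m m' M M' v h r R r1 rh1 : ℝ)
    (hA : A.PosDef) (hB : B.PosDef)
    (hm' : 0 < m') (hm : 0 < m) (hM : 0 < M) (hM' : 0 < M') (hmM : m < M)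
    (hcond : (loewner ((m' : ℂ) • 1) A ∧ loewner A ((m : ℂ) • 1) ∧
        loewner ((M : ℂ) • 1) B ∧ loewner B ((M' : ℂ) • 1)) ∨
      (loewner ((m' : ℂ) • 1) B ∧ loewner B ((m : ℂ) • 1) ∧
        loewner ((M : ℂ) • 1) A ∧ loewner A ((M' : ℂ) • 1)))
    (hh : h = M / m) (hr : r = min v (1 - v))
    (hr1 : r1 = min (2 * r) (1 - 2 * r)) (hrh1 : rh1 = min (2 * r1) (1 - 2 * r1)) (hR : R = max v (1 - v))
    (hv0 : 0 < v) (hv : v < 1) :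
    loewner (anabla (1 / 2) A B)
      (((2 * R : ℝ) : ℂ) • (anabla (1 / 2) A B - asharp (1 / 2) A B)
        - ((r1 : ℝ) : ℂ) • (anabla (1 / 2) A B + asharp (1 / 2) A B - (2 : ℂ) • heinz (1 / 4) A B)
        + ((Kant (h ^ ((1 : ℝ) / 4)) ^ (-rh1) : ℝ) : ℂ) • heinz v A B) := by
  have hAH : A.IsHermitian := hA.1
  have hα : ∀ i, 0 < hAH.eigenvalues i := fun i => hA.eigenvalues_pos i
  have hV1 : star (hAH.eigenvectorUnitary : Matrix (Fin n) (Fin n) ℂ)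
      * (hAH.eigenvectorUnitary : Matrix (Fin n) (Fin n) ℂ) = 1 :=
    Matrix.UnitaryGroup.star_mul_self _
  have hV2 : (hAH.eigenvectorUnitary : Matrix (Fin n) (Fin n) ℂ)
      * star (hAH.eigenvectorUnitary : Matrix (Fin n) (Fin n) ℂ) = 1 :=
    (Matrix.mem_unitaryGroup_iff.mp (Matrix.IsHermitian.eigenvectorUnitary _).2)
  have repA : DRep (hAH.eigenvectorUnitary : Matrix (Fin n) (Fin n) ℂ) hAH.eigenvalues A :=
    spec_rep hAH
  have repT := mrpow_spec hAH (1/2)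
  have repTinv := mrpow_spec hAH (-(1/2))
  -- basic products
  have hTT : mrpow A (1/2) * mrpow A (1/2) = A := by
    have h1 := (repT.mul hV1 repT).congr_fun' (g := hAH.eigenvalues) (fun i => by
      rw [← Real.rpow_add (hα i)]; norm_num)
    exact h1.trans repA.symm
  have hTTinv : mrpow A (1/2) * mrpow A (-(1/2)) = 1 := by
    have h1 := (repT.mul hV1 repTinv).congr_fun' (g := fun _ => (1:ℝ)) (fun i => by
      rw [← Real.rpow_add (hα i)]; norm_num)
    exact h1.trans (DRep.one hV2).symm
  have hTinvT : mrpow A (-(1/2)) * mrpow A (1/2) = 1 := by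
    have h1 := (repTinv.mul hV1 repT).congr_fun' (g := fun _ => (1:ℝ)) (fun i => by
      rw [← Real.rpow_add (hα i)]; norm_num)
    exact h1.trans (DRep.one hV2).symm
  have hTinvSA : star (mrpow A (-(1/2))) = mrpow A (-(1/2)) := repTinv.selfadj
  have hTSA : star (mrpow A (1/2)) = mrpow A (1/2) := repT.selfadj
  -- the central matrix C
  have hCH : (mrpow A (-(1/2)) * B * mrpow A (-(1/2))).IsHermitian := by
    have h1 := Matrix.isHermitian_mul_mul_conjTranspose (mrpow A (-(1/2))) hB.1
    rwa [← Matrix.star_eq_conjTranspose, hTinvSA] at h1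
  have hU1 : star (hCH.eigenvectorUnitary : Matrix (Fin n) (Fin n) ℂ)
      * (hCH.eigenvectorUnitary : Matrix (Fin n) (Fin n) ℂ) = 1 :=
    Matrix.UnitaryGroup.star_mul_self _
  have hU2 : (hCH.eigenvectorUnitary : Matrix (Fin n) (Fin n) ℂ)
      * star (hCH.eigenvectorUnitary : Matrix (Fin n) (Fin n) ℂ) = 1 :=
    (Matrix.mem_unitaryGroup_iff.mp (Matrix.IsHermitian.eigenvectorUnitary _).2)
  have repC : DRep (hCH.eigenvectorUnitary : Matrix (Fin n) (Fin n) ℂ) hCH.eigenvalues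
      (mrpow A (-(1/2)) * B * mrpow A (-(1/2))) := spec_rep hCH
  -- transfer lemma into the frame W = T * U
  have transfer : ∀ (f : Fin n → ℝ) (X : Matrix (Fin n) (Fin n) ℂ),
      DRep (hCH.eigenvectorUnitary : Matrix (Fin n) (Fin n) ℂ) f X →
      DRep (mrpow A (1/2) * (hCH.eigenvectorUnitary : Matrix (Fin n) (Fin n) ℂ)) f
        (mrpow A (1/2) * X * mrpow A (1/2)) := by
    intro f X hX
    unfold DRep at *
    rw [hX, StarMul.star_mul, hTSA]
    simp only [Matrix.mul_assoc]
  have hh1 : 1 < h := by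
    rw [hh, lt_div_iff₀ hm]; linarith
  have repAinv := repTinv.mul hV1 repTinv
  have hinv : ∀ i, hAH.eigenvalues i ^ (-(1/2):ℝ) * hAH.eigenvalues i ^ (-(1/2):ℝ)
      = (hAH.eigenvalues i)⁻¹ := by
    intro i
    rw [← Real.rpow_add (hα i), show (-(1/2):ℝ) + -(1/2) = -1 by norm_num, Real.rpow_neg_one]
  have conjB : ∀ (c : ℝ), loewner ((c:ℂ) • 1) B →
      loewner ((c:ℂ) • (mrpow A (-(1/2)) * mrpow A (-(1/2))))
        (mrpow A (-(1/2)) * B * mrpow A (-(1/2))) := by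
    intro c hc
    have l1 := loewner_conj (mrpow A (-(1/2))) hc
    rw [hTinvSA] at l1
    have e1 : mrpow A (-(1/2)) * ((c:ℂ) • 1) * mrpow A (-(1/2))
        = (c:ℂ) • (mrpow A (-(1/2)) * mrpow A (-(1/2))) := by
      rw [Matrix.mul_smul, Matrix.mul_one, Matrix.smul_mul]
    rwa [e1] at l1
  have conjB' : ∀ (c : ℝ), loewner B ((c:ℂ) • 1) →
      loewner (mrpow A (-(1/2)) * B * mrpow A (-(1/2)))
        ((c:ℂ) • (mrpow A (-(1/2)) * mrpow A (-(1/2)))) := by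
    intro c hc
    have l1 := loewner_conj (mrpow A (-(1/2))) hc
    rw [hTinvSA] at l1
    have e1 : mrpow A (-(1/2)) * ((c:ℂ) • 1) * mrpow A (-(1/2))
        = (c:ℂ) • (mrpow A (-(1/2)) * mrpow A (-(1/2))) := by
      rw [Matrix.mul_smul, Matrix.mul_one, Matrix.smul_mul]
    rwa [e1] at l1
  have hbounds : ∀ i, 0 < hCH.eigenvalues i ∧
      (h ≤ hCH.eigenvalues i ∨ hCH.eigenvalues i ≤ 1/h) := by
    rcases hcond with ⟨hc1, hc2, hc3, hc4⟩ | ⟨hc1, hc2, hc3, hc4⟩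
    · -- m' ≤ A ≤ m < M ≤ B ≤ M'
      have hαm : ∀ i, hAH.eigenvalues i ≤ m :=
        DRep.eig_le hV1 repA (DRep.smul_one hV2 m) hc2
      have l1 := conjB M hc3
      have l2 : loewner ((h:ℂ) • 1)
          ((M:ℂ) • (mrpow A (-(1/2)) * mrpow A (-(1/2)))) := by
        refine DRep.loewner_of_le (DRep.smul_one hV2 h) (repAinv.smul M) (fun i => ?_)
        rw [hinv i, hh, ← div_eq_mul_inv, div_le_div_iff₀ hm (hα i)]
        nlinarith [hαm i, hα i]
      have l3 := loewner_trans l2 l1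
      have hlamh : ∀ i, h ≤ hCH.eigenvalues i :=
        DRep.eig_le hU1 (DRep.smul_one hU2 h) repC l3
      exact fun i => ⟨by linarith [hlamh i], Or.inl (hlamh i)⟩
    · -- m' ≤ B ≤ m < M ≤ A ≤ M'
      have hαM : ∀ i, M ≤ hAH.eigenvalues i :=
        DRep.eig_le hV1 (DRep.smul_one hV2 M) repA hc3
      have hαM' : ∀ i, hAH.eigenvalues i ≤ M' :=
        DRep.eig_le hV1 repA (DRep.smul_one hV2 M') hc4
      have l1 := conjB' m hc2
      have l2 : loewner ((m:ℂ) • (mrpow A (-(1/2)) * mrpow A (-(1/2))))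
          (((1/h : ℝ):ℂ) • 1) := by
        refine DRep.loewner_of_le (repAinv.smul m) (DRep.smul_one hV2 (1/h)) (fun i => ?_)
        rw [hinv i, hh, one_div_div, ← div_eq_mul_inv, div_le_div_iff₀ (hα i) hM]
        nlinarith [hαM i, hα i]
      have l3 := loewner_trans l1 l2
      have hlam1 : ∀ i, hCH.eigenvalues i ≤ 1/h :=
        DRep.eig_le hU1 repC (DRep.smul_one hU2 (1/h)) l3
      have l4 := conjB m' hc1
      have l5 : loewner (((m'/M' : ℝ):ℂ) • 1)
          ((m':ℂ) • (mrpow A (-(1/2)) * mrpow A (-(1/2)))) := by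
        refine DRep.loewner_of_le (DRep.smul_one hV2 (m'/M')) (repAinv.smul m') (fun i => ?_)
        rw [hinv i, ← div_eq_mul_inv, div_le_div_iff₀ hM' (hα i)]
        nlinarith [hαM' i, hα i]
      have l6 := loewner_trans l5 l4
      have hlam0 : ∀ i, m'/M' ≤ hCH.eigenvalues i :=
        DRep.eig_le hU1 (DRep.smul_one hU2 (m'/M')) repC l6
      refine fun i => ⟨lt_of_lt_of_le (by positivity) (hlam0 i), Or.inr (hlam1 i)⟩
  -- representations in the frame W = T * U
  have hBC : mrpow A (1/2) * (mrpow A (-(1/2)) * B * mrpow A (-(1/2))) * mrpow A (1/2) = B := by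
    simp only [← Matrix.mul_assoc]
    rw [hTTinv, Matrix.one_mul, Matrix.mul_assoc, hTinvT, Matrix.mul_one]
  have repWB : DRep (mrpow A (1/2) * (hCH.eigenvectorUnitary : Matrix (Fin n) (Fin n) ℂ))
      hCH.eigenvalues B := by
    have h1 := transfer _ _ repC
    rwa [hBC] at h1
  have repWA : DRep (mrpow A (1/2) * (hCH.eigenvectorUnitary : Matrix (Fin n) (Fin n) ℂ))
      (fun _ => (1:ℝ)) A := by
    have h1 := transfer _ _ (DRep.one hU2)
    rwa [Matrix.mul_one, hTT] at h1
  have repWsharp : ∀ t : ℝ,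
      DRep (mrpow A (1/2) * (hCH.eigenvectorUnitary : Matrix (Fin n) (Fin n) ℂ))
        (fun i => hCH.eigenvalues i ^ t) (asharp t A B) := by
    intro t
    have e : asharp t A B
        = mrpow A (1/2) * mrpow (mrpow A (-(1/2)) * B * mrpow A (-(1/2))) t * mrpow A (1/2) := rfl
    rw [e]
    exact transfer _ _ (mrpow_spec hCH t)
  have eN : anabla (1/2) A B = ((1 - 1/2 : ℝ) : ℂ) • A + ((1/2 : ℝ) : ℂ) • B := rfl
  have repN := (repWA.smul (1 - 1/2)).add (repWB.smul (1/2))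
  rw [← eN] at repN
  have eH4 : heinz (1/4) A B
      = ((1/2 : ℝ) : ℂ) • (asharp (1/4) A B + asharp (1 - 1/4) A B) := rfl
  have repH4 := ((repWsharp (1/4)).add (repWsharp (1 - 1/4))).smul (1/2)
  rw [← eH4] at repH4
  have rep2H4 := repH4.smul 2
  rw [show (((2:ℝ)) : ℂ) = (2:ℂ) by norm_num] at rep2H4
  have eHv : heinz v A B = ((1/2 : ℝ) : ℂ) • (asharp v A B + asharp (1 - v) A B) := rfl
  have repHv := ((repWsharp v).add (repWsharp (1 - v))).smul (1/2)
  rw [← eHv] at repHv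
  have repRHS := (((repN.sub (repWsharp (1/2))).smul (2*R)).sub
      (((repN.add (repWsharp (1/2))).sub rep2H4).smul r1)).add
      (repHv.smul (Kant (h ^ ((1:ℝ)/4)) ^ (-rh1)))
  refine DRep.loewner_of_le repN repRHS (fun i => ?_)
  rw [show (1 - 1/4 : ℝ) = (3:ℝ)/4 by norm_num]
  have SF := scalar_final v r R r1 rh1 (hbounds i).1 hh1 (hbounds i).2 hr hr1 hrh1 hR hv0 hv
  nlinarith [SF]
end
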